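/- List Scheduling is a (2 − 1/m)-approximation for makespan minimization with OR-precedence constraints and release dates: if C is any feasible non-delay schedule and C* is any feasible schedule on the same instance with m machines, then m times the makespan of C is at most (2m − 1) times the makespan of C*. -/

import Mathlib

def IsChainTo {n : ℕ} (P : Fin n → Finset (Fin n)) (k : Fin n) (L : List (Fin n)) : Prop :=
  L ≠ [] ∧ L.getLast? = some k ∧
    (∀ h, L.head? = some h → P h = ∅) ∧
    L.Chain' (fun a b => a ∈ P b)

/-- Value of a chain: `t 1 = r j₁ + p j₁`, `t (q+1) = max (r j_{q+1}) (t q) + p j_{q+1}`. -/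
def chainValue {n : ℕ} (r p : Fin n → ℕ) : List (Fin n) → ℕ
  | [] => 0
  | j :: rest => rest.foldl (fun t j' => max (r j') t + p j') (r j + p j)

/-- Minimal chain length of job `k`: minimum value over all chains to `k`. -/
noncomputable def mc {n : ℕ} (P : Fin n → Finset (Fin n)) (r p : Fin n → ℕ) (k : Fin n) : ℕ :=
  sInf {v | ∃ L, IsChainTo P k L ∧ chainValue r p L = v}

/-- A valid non-preemptive schedule: jobs on the same machine occupy
disjoint half-open intervals `[S j, S j + p j)`. -/
def ValidSchedule {n m : ℕ} (p : Fin n → ℕ) (S : Fin n → ℕ) (M : Fin n → Fin m) : Prop :=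
  ∀ i j : Fin n, i ≠ j → M i = M j →
    ∀ t : ℕ, ¬ ((S i ≤ t ∧ t < S i + p i) ∧ (S j ≤ t ∧ t < S j + p j))

/-- Feasibility: release dates respected and each job with predecessors is
preceded by at least one of them (OR-precedence). -/
def FeasibleSchedule {n : ℕ} (P : Fin n → Finset (Fin n)) (r p S : Fin n → ℕ) : Prop :=
  (∀ j, r j ≤ S j) ∧ ∀ j, P j ≠ ∅ → ∃ i ∈ P j, S i + p i ≤ S j

def makespan {n : ℕ} (p S : Fin n → ℕ) : ℕ := Finset.univ.sup fun j => S j + p j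

/-- Non-delay: whenever some job is available but not yet started at an integer time `t`
before the makespan, all `m` machines are busy at time `t`. -/
def NonDelay {n : ℕ} (m : ℕ) (P : Fin n → Finset (Fin n)) (r p S : Fin n → ℕ) : Prop :=
  ∀ t : ℕ, t < makespan p S →
    (∃ j : Fin n, t < S j ∧ r j ≤ t ∧ (P j = ∅ ∨ ∃ i ∈ P j, S i + p i ≤ t)) →
    (Finset.univ.filter fun j' : Fin n => S j' ≤ t ∧ t < S j' + p j').card = m

namespace LSAux

open Finset

variable {n : ℕ}

lemma chainValue_singleton (r p : Fin n → ℕ) (j : Fin n) :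
    chainValue r p [j] = r j + p j := rfl

lemma chainValue_concat (r p : Fin n → ℕ) {L : List (Fin n)} (hL : L ≠ []) (j : Fin n) :
    chainValue r p (L ++ [j]) = max (r j) (chainValue r p L) + p j := by
  obtain ⟨a, L', rfl⟩ := List.exists_cons_of_ne_nil hL
  show List.foldl _ _ (L' ++ [j]) = _
  rw [List.foldl_append]
  rfl

lemma isChainTo_singleton {P : Fin n → Finset (Fin n)} {j : Fin n} (hP : P j = ∅) :
    IsChainTo P j [j] := by
  refine ⟨List.cons_ne_nil _ _, rfl, ?_, List.isChain_singleton _⟩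
  intro h hh
  obtain rfl : j = h := by injection hh
  exact hP

lemma chain_concat {P : Fin n → Finset (Fin n)} {i j : Fin n} {L : List (Fin n)}
    (h : IsChainTo P i L) (hij : i ∈ P j) : IsChainTo P j (L ++ [j]) := by
  obtain ⟨hne, hlast, hhead, hchain⟩ := h
  obtain ⟨a, L', rfl⟩ := List.exists_cons_of_ne_nil hne
  refine ⟨by simp, by rw [List.getLast?_concat], fun h hh => hhead h hh, ?_⟩
  simp only [List.Chain']
  rw [List.isChain_append]
  refine ⟨hchain, List.isChain_singleton _, ?_⟩
  intro x hx y hy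
  rw [hlast] at hx
  simp only [Option.mem_def, Option.some.injEq] at hx
  simp only [List.head?_cons, Option.mem_def, Option.some.injEq] at hy
  subst hx; subst hy
  exact hij

lemma chain_decomp {P : Fin n → Finset (Fin n)} {j : Fin n} {L : List (Fin n)}
    (h : IsChainTo P j L) :
    (L = [j] ∧ P j = ∅) ∨ ∃ i ∈ P j, ∃ L', L' ≠ [] ∧ IsChainTo P i L' ∧ L = L' ++ [j] := by
  obtain ⟨hne, hlast, hhead, hchain⟩ := h
  rcases List.eq_nil_or_concat L with rfl | ⟨L', b, hLb⟩
  · exact absurd rfl hne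
  rw [List.concat_eq_append] at hLb
  subst hLb
  rw [List.getLast?_concat] at hlast
  replace hlast : j = b := by injection hlast with h; exact h.symm
  subst hlast
  rcases eq_or_ne L' [] with rfl | hL'
  · exact Or.inl ⟨by simp, hhead j rfl⟩
  · right
    simp only [List.Chain'] at hchain
    rw [List.isChain_append] at hchain
    obtain ⟨hc1, -, hc3⟩ := hchain
    have hlast' : L'.getLast? = some (L'.getLast hL') := List.getLast?_eq_getLast hL'
    set i := L'.getLast hL' with hidef
    have hiP : i ∈ P j := by
      apply hc3 i _ j
      · rfl
      · rw [hlast']; rfl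
    refine ⟨i, hiP, L', hL', ⟨hL', hlast', ?_, hc1⟩, rfl⟩
    intro h hh
    apply hhead h
    obtain ⟨a, L'', rfl⟩ := List.exists_cons_of_ne_nil hL'
    exact hh

lemma mc_le_val {P : Fin n → Finset (Fin n)} {r p : Fin n → ℕ} {k : Fin n} {L : List (Fin n)}
    (h : IsChainTo P k L) : mc P r p k ≤ chainValue r p L :=
  Nat.sInf_le ⟨L, h, rfl⟩

lemma p_le_chainValue {P : Fin n → Finset (Fin n)} (r p : Fin n → ℕ) {j : Fin n}
    {L : List (Fin n)} (h : IsChainTo P j L) : p j ≤ chainValue r p L := by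
  rcases chain_decomp h with ⟨rfl, -⟩ | ⟨i, hiP, L', hL', hch, rfl⟩
  · rw [chainValue_singleton]; omega
  · rw [chainValue_concat r p hL']; omega

lemma mc_of_empty {P : Fin n → Finset (Fin n)} {r p : Fin n → ℕ} {j : Fin n} (hP : P j = ∅) :
    mc P r p j = r j + p j := by
  have hne : Set.Nonempty {v | ∃ L, IsChainTo P j L ∧ chainValue r p L = v} :=
    ⟨r j + p j, [j], isChainTo_singleton hP, chainValue_singleton r p j⟩
  obtain ⟨L, hL, hval⟩ : ∃ L, IsChainTo P j L ∧ chainValue r p L = mc P r p j :=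
    Nat.sInf_mem hne
  rcases chain_decomp hL with ⟨rfl, -⟩ | ⟨i, hiP, -⟩
  · rw [← hval, chainValue_singleton]
  · rw [hP] at hiP; simp at hiP

lemma mc_ge_step {P : Fin n → Finset (Fin n)} {r p : Fin n → ℕ} {j : Fin n}
    (hP : P j ≠ ∅) (hch : ∃ L, IsChainTo P j L) :
    ∃ i ∈ P j, max (r j) (mc P r p i) + p j ≤ mc P r p j := by
  have hne : Set.Nonempty {v | ∃ L, IsChainTo P j L ∧ chainValue r p L = v} := by
    obtain ⟨L, hL⟩ := hch; exact ⟨chainValue r p L, L, hL, rfl⟩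
  obtain ⟨L, hL, hval⟩ : ∃ L, IsChainTo P j L ∧ chainValue r p L = mc P r p j :=
    Nat.sInf_mem hne
  rcases chain_decomp hL with ⟨-, h⟩ | ⟨i, hiP, L', hL'ne, hL', rfl⟩
  · exact absurd h hP
  · refine ⟨i, hiP, ?_⟩
    rw [chainValue_concat r p hL'ne] at hval
    have h1 : mc P r p i ≤ chainValue r p L' := mc_le_val hL'
    calc max (r j) (mc P r p i) + p j
        ≤ max (r j) (chainValue r p L') + p j := by
          exact Nat.add_le_add_right (max_le_max le_rfl h1) _
      _ = mc P r p j := hval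

lemma exists_chain_le {P : Fin n → Finset (Fin n)} {r p S'' : Fin n → ℕ}
    (hp : ∀ j, 1 ≤ p j) (hfeas : FeasibleSchedule P r p S'') :
    ∀ j, ∃ L, IsChainTo P j L ∧ chainValue r p L ≤ S'' j + p j := by
  suffices H : ∀ T j, S'' j < T → ∃ L, IsChainTo P j L ∧ chainValue r p L ≤ S'' j + p j from
    fun j => H (S'' j + 1) j (Nat.lt_succ_self _)
  intro T
  induction T with
  | zero => intro j h; omega
  | succ T ih =>
    intro j hj
    rcases em (P j = ∅) with hP | hP
    · refine ⟨[j], isChainTo_singleton hP, ?_⟩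
      rw [chainValue_singleton]
      have := hfeas.1 j
      omega
    · obtain ⟨i, hiP, hile⟩ := hfeas.2 j hP
      have hiT : S'' i < T := by have := hp i; omega
      obtain ⟨L, hL, hval⟩ := ih i hiT
      refine ⟨L ++ [j], chain_concat hL hiP, ?_⟩
      rw [chainValue_concat r p hL.1]
      have hr := hfeas.1 j
      have : max (r j) (chainValue r p L) ≤ S'' j := max_le hr (le_trans hval hile)
      omega

lemma mc_le_completion {P : Fin n → Finset (Fin n)} {r p S'' : Fin n → ℕ}
    (hp : ∀ j, 1 ≤ p j) (hfeas : FeasibleSchedule P r p S'') (j : Fin n) :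
    mc P r p j ≤ S'' j + p j := by
  obtain ⟨L, hL, hval⟩ := exists_chain_le hp hfeas j
  exact le_trans (mc_le_val hL) hval

lemma busy_le {m : ℕ} (p S'' : Fin n → ℕ) (M'' : Fin n → Fin m)
    (hvalid : ValidSchedule p S'' M'') (Q : Finset (Fin n)) (t : ℕ) :
    (Q.filter fun j => S'' j ≤ t ∧ t < S'' j + p j).card ≤ m := by
  calc (Q.filter fun j => S'' j ≤ t ∧ t < S'' j + p j).card
      ≤ (Finset.univ : Finset (Fin m)).card := by
        apply Finset.card_le_card_of_injOn M'' (fun _ _ => Finset.mem_univ _)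
        intro i hi j hj hij
        by_contra hne
        exact hvalid i j hne hij t ⟨(Finset.mem_filter.1 hi).2, (Finset.mem_filter.1 hj).2⟩
    _ = m := by simp

lemma sum_p_eq (p S'' : Fin n → ℕ) (Q : Finset (Fin n)) (a b : ℕ)
    (h : ∀ j ∈ Q, a ≤ S'' j ∧ S'' j + p j ≤ b) :
    ∑ j ∈ Q, p j = ∑ t ∈ Finset.Ico a b, (Q.filter fun j => S'' j ≤ t ∧ t < S'' j + p j).card := by
  have key : ∀ j ∈ Q, p j = ∑ t ∈ Finset.Ico a b, if S'' j ≤ t ∧ t < S'' j + p j then 1 else 0 := by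
    intro j hj
    have h1 : (Finset.Ico a b).filter (fun t => S'' j ≤ t ∧ t < S'' j + p j)
        = Finset.Ico (S'' j) (S'' j + p j) := by
      ext t
      simp only [Finset.mem_filter, Finset.mem_Ico]
      have := h j hj
      omega
    rw [← Finset.card_filter, h1, Nat.card_Ico]
    omega
  rw [Finset.sum_congr rfl key, Finset.sum_comm]
  apply Finset.sum_congr rfl
  intro t _
  rw [Finset.card_filter]

lemma work_le {m : ℕ} (p S'' : Fin n → ℕ) (M'' : Fin n → Fin m)
    (hvalid : ValidSchedule p S'' M'') (Q : Finset (Fin n)) (a b : ℕ)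
    (h : ∀ j ∈ Q, a ≤ S'' j ∧ S'' j + p j ≤ b) :
    ∑ j ∈ Q, p j ≤ m * (b - a) := by
  rw [sum_p_eq p S'' Q a b h]
  calc ∑ t ∈ Finset.Ico a b, (Q.filter fun j => S'' j ≤ t ∧ t < S'' j + p j).card
      ≤ ∑ _t ∈ Finset.Ico a b, m :=
        Finset.sum_le_sum (fun t _ => busy_le p S'' M'' hvalid Q t)
    _ = m * (b - a) := by rw [Finset.sum_const, Nat.card_Ico, smul_eq_mul, mul_comm]


lemma idle_le_mc {m : ℕ} (P : Fin n → Finset (Fin n)) (p r S : Fin n → ℕ)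
    (hp : ∀ j, 1 ≤ p j)
    (hchain : ∀ j : Fin n, ∃ L, IsChainTo P j L)
    (hmcS : ∀ j, mc P r p j ≤ S j + p j)
    (hnoavail : ∀ t, (Finset.univ.filter fun j' : Fin n => S j' ≤ t ∧ t < S j' + p j').card < m →
      ∀ j : Fin n, t < S j → t < r j ∨ (P j ≠ ∅ ∧ ∀ i ∈ P j, t < S i + p i)) :
    ∀ j : Fin n, ((Finset.range (S j + p j)).filter fun t =>
      (Finset.univ.filter fun j' : Fin n => S j' ≤ t ∧ t < S j' + p j').card < m).card
      ≤ mc P r p j := by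
  suffices H : ∀ v (j : Fin n), mc P r p j ≤ v →
      ((Finset.range (S j + p j)).filter fun t =>
        (Finset.univ.filter fun j' : Fin n => S j' ≤ t ∧ t < S j' + p j').card < m).card
        ≤ mc P r p j from
    fun j => H (mc P r p j) j le_rfl
  intro v
  induction v with
  | zero =>
    intro j hle
    obtain ⟨L, hL⟩ := hchain j
    have h1 : p j ≤ chainValue r p L := p_le_chainValue r p hL
    have h2 : mc P r p j ≤ chainValue r p L := mc_le_val hL
    -- mc j = 0 but also mc j attained as value of some chain which is ≥ p j ≥ 1
    have hne : Set.Nonempty {w | ∃ L, IsChainTo P j L ∧ chainValue r p L = w} :=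
      ⟨chainValue r p L, L, hL, rfl⟩
    obtain ⟨L', hL', hval⟩ : ∃ L', IsChainTo P j L' ∧ chainValue r p L' = mc P r p j :=
      Nat.sInf_mem hne
    have := p_le_chainValue r p hL'
    have := hp j
    omega
  | succ v ih =>
    intro j hle
    rcases em (P j = ∅) with hP | hP
    · have hmcj : mc P r p j = r j + p j := mc_of_empty hP
      have hsub : ((Finset.range (S j + p j)).filter fun t =>
          (Finset.univ.filter fun j' : Fin n => S j' ≤ t ∧ t < S j' + p j').card < m)
          ⊆ Finset.range (r j) ∪ Finset.Ico (S j) (S j + p j) := by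
        intro t ht
        simp only [Finset.mem_filter, Finset.mem_range] at ht
        rcases le_or_gt (S j) t with h | h
        · exact Finset.mem_union_right _ (Finset.mem_Ico.2 ⟨h, ht.1⟩)
        · rcases hnoavail t ht.2 j h with h1 | h2
          · exact Finset.mem_union_left _ (Finset.mem_range.2 h1)
          · exact absurd hP h2.1
      calc ((Finset.range (S j + p j)).filter fun t =>
            (Finset.univ.filter fun j' : Fin n => S j' ≤ t ∧ t < S j' + p j').card < m).card
          ≤ (Finset.range (r j) ∪ Finset.Ico (S j) (S j + p j)).card := Finset.card_le_card hsub
        _ ≤ (Finset.range (r j)).card + (Finset.Ico (S j) (S j + p j)).card :=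
            Finset.card_union_le _ _
        _ ≤ mc P r p j := by rw [Finset.card_range, Nat.card_Ico, hmcj]; omega
    · obtain ⟨i, hiP, hmax⟩ := mc_ge_step (r := r) (p := p) hP (hchain j)
      have hmx1 : r j ≤ max (r j) (mc P r p i) := le_max_left _ _
      have hmx2 : mc P r p i ≤ max (r j) (mc P r p i) := le_max_right _ _
      have hXle : mc P r p i ≤ v := by have := hp j; omega
      have hIH := ih i hXle
      have hmiC : mc P r p i ≤ S i + p i := hmcS i
      have hsub : ((Finset.range (S j + p j)).filter fun t =>
          (Finset.univ.filter fun j' : Fin n => S j' ≤ t ∧ t < S j' + p j').card < m)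
          ⊆ (((Finset.range (S i + p i)).filter fun t =>
              (Finset.univ.filter fun j' : Fin n => S j' ≤ t ∧ t < S j' + p j').card < m)
            ∪ Finset.Ico (S i + p i) (r j)) ∪ Finset.Ico (S j) (S j + p j) := by
        intro t ht
        simp only [Finset.mem_filter, Finset.mem_range] at ht
        rcases le_or_gt (S j) t with h | h
        · exact Finset.mem_union_right _ (Finset.mem_Ico.2 ⟨h, ht.1⟩)
        · rcases hnoavail t ht.2 j h with h1 | h2
          · rcases lt_or_ge t (S i + p i) with h3 | h3
            · exact Finset.mem_union_left _ (Finset.mem_union_left _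
                (Finset.mem_filter.2 ⟨Finset.mem_range.2 h3, ht.2⟩))
            · exact Finset.mem_union_left _ (Finset.mem_union_right _
                (Finset.mem_Ico.2 ⟨h3, h1⟩))
          · have h4 := h2.2 i hiP
            exact Finset.mem_union_left _ (Finset.mem_union_left _
              (Finset.mem_filter.2 ⟨Finset.mem_range.2 h4, ht.2⟩))
      calc ((Finset.range (S j + p j)).filter fun t =>
            (Finset.univ.filter fun j' : Fin n => S j' ≤ t ∧ t < S j' + p j').card < m).card
          ≤ ((((Finset.range (S i + p i)).filter fun t =>
              (Finset.univ.filter fun j' : Fin n => S j' ≤ t ∧ t < S j' + p j').card < m)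
            ∪ Finset.Ico (S i + p i) (r j)) ∪ Finset.Ico (S j) (S j + p j)).card :=
            Finset.card_le_card hsub
        _ ≤ (((Finset.range (S i + p i)).filter fun t =>
              (Finset.univ.filter fun j' : Fin n => S j' ≤ t ∧ t < S j' + p j').card < m)
            ∪ Finset.Ico (S i + p i) (r j)).card + (Finset.Ico (S j) (S j + p j)).card :=
            Finset.card_union_le _ _
        _ ≤ (((Finset.range (S i + p i)).filter fun t =>
              (Finset.univ.filter fun j' : Fin n => S j' ≤ t ∧ t < S j' + p j').card < m).card
            + (Finset.Ico (S i + p i) (r j)).card) + (Finset.Ico (S j) (S j + p j)).card :=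
            Nat.add_le_add_right (Finset.card_union_le _ _) _
        _ ≤ mc P r p j := by
            rw [Nat.card_Ico, Nat.card_Ico]
            have := hp j
            omega


lemma sum_add_mz_le {m : ℕ} (P : Fin n → Finset (Fin n)) (p r S S' : Fin n → ℕ)
    (M : Fin n → Fin m) (M' : Fin n → Fin m)
    (hm : 1 ≤ m) (hp : ∀ j, 1 ≤ p j)
    (hvalid : ValidSchedule p S M)
    (hvalid' : ValidSchedule p S' M') (hfeas' : FeasibleSchedule P r p S')
    (b : ℕ) (hb : ∀ j, S' j + p j ≤ b)
    (hnoavail : ∀ t, (Finset.univ.filter fun j' : Fin n => S j' ≤ t ∧ t < S j' + p j').card < m →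
      ∀ j : Fin n, t < S j → t < r j ∨ (P j ≠ ∅ ∧ ∀ i ∈ P j, t < S i + p i))
    (T : ℕ) (k : Fin n) (hkT : T = S k + p k) :
    ∑ j : Fin n, p j + m * ((Finset.range T).filter fun t =>
      (Finset.univ.filter fun j' : Fin n => S j' ≤ t ∧ t < S j' + p j').card = 0).card
      ≤ m * b := by
  classical
  set Z := (Finset.range T).filter (fun t =>
    (Finset.univ.filter fun j' : Fin n => S j' ≤ t ∧ t < S j' + p j').card = 0) with hZ
  rcases Z.eq_empty_or_nonempty with hz | hz
  · rw [hz]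
    simp only [Finset.card_empty, Nat.mul_zero, Nat.add_zero]
    have := work_le p S' M' hvalid' Finset.univ 0 b (fun j _ => ⟨Nat.zero_le _, hb j⟩)
    simpa using this
  · set t0 := Z.max' hz with ht0def
    have ht0mem : t0 ∈ Z := Z.max'_mem hz
    rw [hZ, Finset.mem_filter, Finset.mem_range] at ht0mem
    obtain ⟨ht0T, hB0⟩ := ht0mem
    have hnotrun : ∀ i : Fin n, ¬(S i ≤ t0 ∧ t0 < S i + p i) := by
      intro i hi
      have h1 : i ∈ Finset.univ.filter (fun j' : Fin n => S j' ≤ t0 ∧ t0 < S j' + p j') :=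
        Finset.mem_filter.2 ⟨Finset.mem_univ _, hi⟩
      rw [Finset.card_eq_zero] at hB0
      rw [hB0] at h1
      exact absurd h1 (Finset.notMem_empty _)
    have hclose : ∀ j : Fin n, t0 < S j → t0 < S' j := by
      suffices H : ∀ Tb (j : Fin n), S' j < Tb → t0 < S j → t0 < S' j from
        fun j hj => H (S' j + 1) j (Nat.lt_succ_self _) hj
      intro Tb
      induction Tb with
      | zero => intro j h; omega
      | succ Tb ih =>
        intro j hTb hj
        rcases hnoavail t0 (by rw [hB0]; omega) j hj with h1 | ⟨hPne, hall⟩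
        · have := hfeas'.1 j; omega
        · obtain ⟨i, hiP, hile⟩ := hfeas'.2 j hPne
          have hSi : t0 < S i := by have h2 := hall i hiP; have h3 := hnotrun i; omega
          have h4 : t0 < S' i := ih i (by have := hp i; omega) hSi
          have := hp i; omega
    have hSk : t0 < S k := by have := hnotrun k; omega
    have ht0b : t0 + 1 ≤ b := by
      have h1 := hclose k hSk; have h2 := hb k; have := hp k; omega
    have hQsum : ∑ j ∈ Finset.univ.filter (fun j : Fin n => t0 < S j), p j
        ≤ m * (b - (t0 + 1)) := by
      apply work_le p S' M' hvalid'
      intro j hj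
      have := hclose j (Finset.mem_filter.1 hj).2
      exact ⟨by omega, hb j⟩
    have hNQ : ∑ j ∈ Finset.univ.filter (fun j : Fin n => ¬ t0 < S j), p j + m * Z.card
        ≤ m * (t0 + 1) := by
      have hNQb : ∀ j ∈ Finset.univ.filter (fun j : Fin n => ¬ t0 < S j),
          0 ≤ S j ∧ S j + p j ≤ t0 + 1 := by
        intro j hj
        have hj' := (Finset.mem_filter.1 hj).2
        have := hnotrun j
        exact ⟨Nat.zero_le _, by omega⟩
      rw [sum_p_eq p S _ 0 (t0 + 1) hNQb]
      have hZeq : Z = (Finset.Ico 0 (t0+1)).filter (fun t =>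
          (Finset.univ.filter fun j' : Fin n => S j' ≤ t ∧ t < S j' + p j').card = 0) := by
        rw [hZ]
        ext t
        simp only [Finset.mem_filter, Finset.mem_range, Finset.mem_Ico]
        constructor
        · rintro ⟨h1, h2⟩
          refine ⟨⟨Nat.zero_le _, ?_⟩, h2⟩
          have ht : t ≤ t0 := by
            rw [ht0def]
            exact Z.le_max' t (by rw [hZ]; exact Finset.mem_filter.2 ⟨Finset.mem_range.2 h1, h2⟩)
          omega
        · rintro ⟨⟨-, h1⟩, h2⟩
          exact ⟨by omega, h2⟩
      have hmz : ∑ t ∈ Finset.Ico 0 (t0+1), (if (Finset.univ.filter fun j' : Fin n =>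
          S j' ≤ t ∧ t < S j' + p j').card = 0 then m else 0) = m * Z.card := by
        rw [← Finset.sum_filter, ← hZeq, Finset.sum_const, smul_eq_mul, mul_comm]
      calc (∑ t ∈ Finset.Ico 0 (t0+1), ((Finset.univ.filter (fun j : Fin n => ¬ t0 < S j)).filter
              fun j => S j ≤ t ∧ t < S j + p j).card) + m * Z.card
          = ∑ t ∈ Finset.Ico 0 (t0+1), (((Finset.univ.filter (fun j : Fin n => ¬ t0 < S j)).filter
              fun j => S j ≤ t ∧ t < S j + p j).card
            + (if (Finset.univ.filter fun j' : Fin n =>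
              S j' ≤ t ∧ t < S j' + p j').card = 0 then m else 0)) := by
            rw [Finset.sum_add_distrib, hmz]
        _ ≤ ∑ _t ∈ Finset.Ico 0 (t0+1), m := by
            apply Finset.sum_le_sum
            intro t _
            by_cases hBt : (Finset.univ.filter fun j' : Fin n =>
                S j' ≤ t ∧ t < S j' + p j').card = 0
            · rw [if_pos hBt]
              have hcard0 : ((Finset.univ.filter (fun j : Fin n => ¬ t0 < S j)).filter
                  fun j => S j ≤ t ∧ t < S j + p j).card = 0 := by
                rw [Finset.card_eq_zero] at hBt ⊢
                exact Finset.subset_empty.1 (hBt ▸ Finset.filter_subset_filter _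
                  (Finset.subset_univ _))
              omega
            · rw [if_neg hBt]
              have := busy_le p S M hvalid (Finset.univ.filter (fun j : Fin n => ¬ t0 < S j)) t
              omega
        _ = m * (t0 + 1) := by rw [Finset.sum_const, Nat.card_Ico, Nat.sub_zero, smul_eq_mul, mul_comm]
    have hsplit := Finset.sum_filter_add_sum_filter_not Finset.univ (fun j : Fin n => t0 < S j) p
    have hmul : m * (b - (t0+1)) + m * (t0+1) = m * b := by
      rw [← Nat.mul_add, Nat.sub_add_cancel ht0b]
    omega

end LSAux

/-- List Scheduling is a `(2 - 1/m)`-approximation: for any feasible non-delay schedule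
`S` and any feasible schedule `S'` on the same instance with `m` machines,
`m * makespan S ≤ (2m - 1) * makespan S'`. -/
theorem list_scheduling_two_approx {n m : ℕ} (hm : 1 ≤ m)
    (P : Fin n → Finset (Fin n)) (p r : Fin n → ℕ)
    (hp : ∀ j, 1 ≤ p j)
    (S : Fin n → ℕ) (M : Fin n → Fin m)
    (hvalid : ValidSchedule p S M)
    (hfeas : FeasibleSchedule P r p S)
    (hnd : NonDelay m P r p S)
    (S' : Fin n → ℕ) (M' : Fin n → Fin m)
    (hvalid' : ValidSchedule p S' M')
    (hfeas' : FeasibleSchedule P r p S') :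
    m * makespan p S ≤ (2 * m - 1) * makespan p S' := by
  classical
  have hCj : ∀ j : Fin n, S j + p j ≤ makespan p S := fun j =>
    Finset.le_sup (f := fun j => S j + p j) (Finset.mem_univ j)
  have hCj' : ∀ j : Fin n, S' j + p j ≤ makespan p S' := fun j =>
    Finset.le_sup (f := fun j => S' j + p j) (Finset.mem_univ j)
  rcases (Finset.univ : Finset (Fin n)).eq_empty_or_nonempty with hu | hu
  · have h0 : makespan p S = 0 := by
      rw [makespan, hu, Finset.sup_empty]
      rfl
    rw [h0]
    simp
  · obtain ⟨k, -, hk⟩ := Finset.exists_mem_eq_sup Finset.univ hu (fun j => S j + p j)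
    replace hk : makespan p S = S k + p k := hk
    have hBle : ∀ t, (Finset.univ.filter fun j' : Fin n => S j' ≤ t ∧ t < S j' + p j').card ≤ m :=
      fun t => LSAux.busy_le p S M hvalid Finset.univ t
    have hnoavail : ∀ t,
        (Finset.univ.filter fun j' : Fin n => S j' ≤ t ∧ t < S j' + p j').card < m →
        ∀ j : Fin n, t < S j → t < r j ∨ (P j ≠ ∅ ∧ ∀ i ∈ P j, t < S i + p i) := by
      intro t hbt j hj
      by_contra hcon
      push_neg at hcon
      obtain ⟨h1, h2⟩ := hcon
      have hmk : t < makespan p S := by have := hCj j; have := hp j; omega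
      have hav : ∃ j : Fin n, t < S j ∧ r j ≤ t ∧ (P j = ∅ ∨ ∃ i ∈ P j, S i + p i ≤ t) := by
        refine ⟨j, hj, h1, ?_⟩
        rcases em (P j = ∅) with h | h
        · exact Or.inl h
        · obtain ⟨i, hiP, hile⟩ := h2 (Finset.nonempty_iff_ne_empty.2 h)
          exact Or.inr ⟨i, hiP, hile⟩
      have := hnd t hmk hav
      omega
    have hchain : ∀ j : Fin n, ∃ L, IsChainTo P j L := by
      intro j
      obtain ⟨L, hL, -⟩ := LSAux.exists_chain_le hp hfeas j
      exact ⟨L, hL⟩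
    have hmcS : ∀ j, mc P r p j ≤ S j + p j := LSAux.mc_le_completion hp hfeas
    have hmcS' : ∀ j, mc P r p j ≤ S' j + p j := LSAux.mc_le_completion hp hfeas'
    have hmain := LSAux.idle_le_mc P p r S hp hchain hmcS hnoavail
    have hQZ := LSAux.sum_add_mz_le P p r S S' M M' hm hp hvalid hvalid' hfeas'
      (makespan p S') hCj' hnoavail (makespan p S) k hk
    have hBsum : ∑ t ∈ Finset.range (makespan p S),
        (Finset.univ.filter fun j' : Fin n => S j' ≤ t ∧ t < S j' + p j').card
        = ∑ j : Fin n, p j := by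
      rw [Finset.range_eq_Ico]
      exact (LSAux.sum_p_eq p S Finset.univ 0 (makespan p S)
        (fun j _ => ⟨Nat.zero_le _, hCj j⟩)).symm
    have hsum1 : m * makespan p S = ∑ j : Fin n, p j + ∑ t ∈ Finset.range (makespan p S),
        (m - (Finset.univ.filter fun j' : Fin n => S j' ≤ t ∧ t < S j' + p j').card) := by
      calc m * makespan p S = ∑ _t ∈ Finset.range (makespan p S), m := by
            rw [Finset.sum_const, Finset.card_range, smul_eq_mul, mul_comm]
        _ = ∑ t ∈ Finset.range (makespan p S),
            ((Finset.univ.filter fun j' : Fin n => S j' ≤ t ∧ t < S j' + p j').card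
              + (m - (Finset.univ.filter fun j' : Fin n => S j' ≤ t ∧ t < S j' + p j').card)) :=
            Finset.sum_congr rfl (fun t _ => by have := hBle t; omega)
        _ = _ := by rw [Finset.sum_add_distrib, hBsum]
    have hdef : ∑ t ∈ Finset.range (makespan p S),
        (m - (Finset.univ.filter fun j' : Fin n => S j' ≤ t ∧ t < S j' + p j').card)
        ≤ m * ((Finset.range (makespan p S)).filter fun t =>
            (Finset.univ.filter fun j' : Fin n => S j' ≤ t ∧ t < S j' + p j').card = 0).card
          + (m - 1) * ((Finset.range (makespan p S)).filter fun t =>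
            (Finset.univ.filter fun j' : Fin n => S j' ≤ t ∧ t < S j' + p j').card < m).card := by
      calc ∑ t ∈ Finset.range (makespan p S),
          (m - (Finset.univ.filter fun j' : Fin n => S j' ≤ t ∧ t < S j' + p j').card)
          ≤ ∑ t ∈ Finset.range (makespan p S),
            ((if (Finset.univ.filter fun j' : Fin n => S j' ≤ t ∧ t < S j' + p j').card = 0
                then m else 0)
              + (if (Finset.univ.filter fun j' : Fin n => S j' ≤ t ∧ t < S j' + p j').card < m
                then m - 1 else 0)) := by
            apply Finset.sum_le_sum
            intro t _
            have := hBle t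
            split_ifs <;> omega
        _ = _ := by
            rw [Finset.sum_add_distrib, ← Finset.sum_filter, ← Finset.sum_filter,
              Finset.sum_const, Finset.sum_const, smul_eq_mul, smul_eq_mul]
            ring
    have hIcard : ((Finset.range (makespan p S)).filter fun t =>
        (Finset.univ.filter fun j' : Fin n => S j' ≤ t ∧ t < S j' + p j').card < m).card
        ≤ mc P r p k := by
      rw [hk]
      exact hmain k
    have hmck : mc P r p k ≤ makespan p S' := le_trans (hmcS' k) (hCj' k)
    have hIC : (m - 1) * ((Finset.range (makespan p S)).filter fun t =>
        (Finset.univ.filter fun j' : Fin n => S j' ≤ t ∧ t < S j' + p j').card < m).card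
        ≤ (m - 1) * makespan p S' :=
      Nat.mul_le_mul_left _ (le_trans hIcard hmck)
    have hfin : (2 * m - 1) * makespan p S' = m * makespan p S' + (m - 1) * makespan p S' := by
      have h2 : 2 * m - 1 = m + (m - 1) := by omega
      rw [h2, Nat.add_mul]
    omega
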